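/- For every natural number i ≥ 0, there exist rational numbers α, β, γ such that (1/π)·∫₀^{π/2} x·cos²(x)·(1−cos(x))^{2i} dx = α + β·π + γ/π. -/

import Mathlib

open Real MeasureTheory intervalIntegral

noncomputable def genV (m : ℤ) : ℝ → ℝ := fun x => Real.cos (m * x)

noncomputable def Vspan : Submodule ℚ (ℝ → ℝ) := Submodule.span ℚ (Set.range genV)

lemma gen_mul_gen (a b : ℤ) :
    genV a * genV b = ((1:ℚ)/2) • (genV (a+b) + genV (a-b)) := by
  funext x
  simp only [genV, Pi.mul_apply, Pi.smul_apply, Pi.add_apply, Rat.smul_def]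
  push_cast
  rw [add_mul, sub_mul, Real.cos_add, Real.cos_sub]
  ring

lemma gen_mem : ∀ a : ℤ, genV a ∈ Vspan := fun a =>
  Submodule.subset_span ⟨a, rfl⟩

lemma mul_mem_V {f g : ℝ → ℝ} (hf : f ∈ Vspan) (hg : g ∈ Vspan) :
    f * g ∈ Vspan := by
  induction hf using Submodule.span_induction with
  | mem f hf =>
    obtain ⟨a, rfl⟩ := hf
    induction hg using Submodule.span_induction with
    | mem g hg =>
      obtain ⟨b, rfl⟩ := hg
      rw [gen_mul_gen]
      exact Submodule.smul_mem _ _ (Submodule.add_mem _ (gen_mem _) (gen_mem _))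
    | zero => simpa using Submodule.zero_mem Vspan
    | add g h _ _ ihg ihh => rw [mul_add]; exact Submodule.add_mem _ ihg ihh
    | smul q g _ ihg =>
      rw [mul_smul_comm]; exact Submodule.smul_mem _ _ ihg
  | zero => simpa using Submodule.zero_mem Vspan
  | add f h _ _ ihf ihh => rw [add_mul]; exact Submodule.add_mem _ ihf ihh
  | smul q f _ ihf => rw [smul_mul_assoc]; exact Submodule.smul_mem _ _ ihf

lemma pow_mem_V {f : ℝ → ℝ} (hf : f ∈ Vspan) (n : ℕ) : f ^ n ∈ Vspan := by
  induction n with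
  | zero =>
    have : (f ^ 0 : ℝ → ℝ) = genV 0 := by
      funext x; simp [genV]
    rw [this]; exact gen_mem 0
  | succ n ih => rw [pow_succ]; exact mul_mem_V ih hf

lemma sin_cos_rat (m : ℤ) :
    ∃ s c : ℚ, Real.sin (m * (π/2)) = s ∧ Real.cos (m * (π/2)) = c := by
  induction m using Int.induction_on with
  | zero => exact ⟨0, 1, by simp, by simp⟩
  | succ n ih =>
    obtain ⟨s, c, hs, hc⟩ := ih
    have h : (((n:ℤ)+1 : ℤ):ℝ) * (π/2) = ((n:ℤ):ℝ) * (π/2) + π/2 := by push_cast; ring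
    refine ⟨c, -s, ?_, ?_⟩
    · rw [h, Real.sin_add_pi_div_two, hc]
    · rw [h, Real.cos_add_pi_div_two, hs]; push_cast; ring
  | pred n ih =>
    obtain ⟨s, c, hs, hc⟩ := ih
    have h : ((-(n:ℤ)-1 : ℤ):ℝ) * (π/2) = ((-(n:ℤ) : ℤ):ℝ) * (π/2) - π/2 := by push_cast; ring
    refine ⟨-c, s, ?_, ?_⟩
    · rw [h, Real.sin_sub_pi_div_two, hc]; push_cast; ring
    · rw [h, Real.cos_sub_pi_div_two, hs]

lemma deriv_aux (m : ℤ) (hm : (m:ℝ) ≠ 0) (x : ℝ) :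
    HasDerivAt (fun x : ℝ => x * Real.sin (m*x) / m + Real.cos (m*x) / m^2)
      (x * Real.cos (m*x)) x := by
  have h1 : HasDerivAt (fun x : ℝ => Real.sin (m*x)) (Real.cos (m*x) * m) x := by
    simpa [Function.comp_def] using (Real.hasDerivAt_sin (m*x)).comp x ((hasDerivAt_id x).const_mul (m:ℝ))
  have h2 : HasDerivAt (fun x : ℝ => Real.cos (m*x)) (-Real.sin (m*x) * m) x := by
    simpa [Function.comp_def] using (Real.hasDerivAt_cos (m*x)).comp x ((hasDerivAt_id x).const_mul (m:ℝ))
  have h3 := ((hasDerivAt_id x).mul h1).div_const (m:ℝ)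
  have h4 := h2.div_const ((m:ℝ)^2)
  refine (h3.add h4).congr_deriv ?_
  field_simp
  simp only [id]
  ring

lemma integral_x_gen (m : ℤ) :
    ∃ a b c : ℚ, ∫ x in (0:ℝ)..(π/2), x * genV m x = a + b*π + c*π^2 := by
  by_cases hm : (m:ℝ) = 0
  · refine ⟨0, 0, 1/8, ?_⟩
    have : (fun x : ℝ => x * genV m x) = fun x : ℝ => x := by
      funext x; simp [genV, hm]
    rw [this, integral_id]
    push_cast
    ring
  · obtain ⟨s, c, hs, hc⟩ := sin_cos_rat m
    refine ⟨(c - 1)/m^2, s/(2*m), 0, ?_⟩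
    have hcont : Continuous (fun x : ℝ => x * Real.cos ((m:ℝ)*x)) := by fun_prop
    rw [show (fun x : ℝ => x * genV m x) = fun x : ℝ => x * Real.cos ((m:ℝ)*x) from rfl,
      intervalIntegral.integral_eq_sub_of_hasDerivAt (fun x _ => deriv_aux m hm x)
      (hcont.intervalIntegrable _ _)]
    simp only [hs, hc, mul_zero, Real.sin_zero, Real.cos_zero, zero_mul]
    have hm2 : ((m:ℝ))^2 ≠ 0 := pow_ne_zero _ hm
    push_cast
    field_simp
    ring

noncomputable def Wsub : Submodule ℚ (ℝ → ℝ) where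
  carrier := {f | IntervalIntegrable (fun x => x * f x) volume 0 (π/2) ∧
      ∃ a b c : ℚ, ∫ x in (0:ℝ)..(π/2), x * f x = a + b*π + c*π^2}
  zero_mem' := by
    refine ⟨by simpa using intervalIntegrable_const (c := (0:ℝ)), 0, 0, 0, ?_⟩
    simp
  add_mem' := by
    rintro f g ⟨hfi, a, b, c, hf⟩ ⟨hgi, a', b', c', hg⟩
    refine ⟨?_, a+a', b+b', c+c', ?_⟩
    · have : (fun x => x * (f + g) x) = (fun x => x * f x) + fun x => x * g x := by
        funext x; simp [mul_add]
      rw [this]; exact hfi.add hgi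
    · have : (fun x => x * (f + g) x) = fun x => x * f x + x * g x := by
        funext x; simp [mul_add]
      rw [this, intervalIntegral.integral_add hfi hgi, hf, hg]
      push_cast; ring
  smul_mem' := by
    rintro q f ⟨hfi, a, b, c, hf⟩
    refine ⟨?_, q*a, q*b, q*c, ?_⟩
    · have : (fun x => x * (q • f) x) = fun x => (q:ℝ) * (x * f x) := by
        funext x; simp [Rat.smul_def]; ring
      rw [this]; exact hfi.const_mul _
    · have : (fun x => x * (q • f) x) = fun x => (q:ℝ) * (x * f x) := by
        funext x; simp [Rat.smul_def]; ring
      rw [this, intervalIntegral.integral_const_mul, hf]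
      push_cast; ring

lemma V_le_W : Vspan ≤ Wsub := by
  rw [Vspan, Submodule.span_le]
  rintro f ⟨m, rfl⟩
  refine ⟨?_, integral_x_gen m⟩
  exact (continuous_id.mul (Real.continuous_cos.comp (continuous_const.mul continuous_id))).intervalIntegrable _ _

theorem stmt_19 (i : ℕ) :
    ∃ α β γ : ℚ,
      (1/π) * ∫ x in (0:ℝ)..(π/2), x * cos x ^ 2 * (1 - cos x) ^ (2*i) =
        (α:ℝ) + (β:ℝ) * π + (γ:ℝ) / π := by
  have hcos : (fun x : ℝ => Real.cos x) ∈ Vspan := by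
    have : (fun x : ℝ => Real.cos x) = genV 1 := by
      funext x; simp [genV]
    rw [this]; exact gen_mem 1
  have hone : (fun _ : ℝ => (1:ℝ)) ∈ Vspan := by
    have : (fun _ : ℝ => (1:ℝ)) = genV 0 := by
      funext x; simp [genV]
    rw [this]; exact gen_mem 0
  have hsub : (fun x : ℝ => 1 - Real.cos x) ∈ Vspan := Submodule.sub_mem _ hone hcos
  have hg : (fun x : ℝ => Real.cos x ^ 2 * (1 - Real.cos x) ^ (2*i)) ∈ Vspan := by
    have h1 : ((fun x : ℝ => Real.cos x) ^ 2 : ℝ → ℝ) ∈ Vspan := pow_mem_V hcos 2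
    have h2 : ((fun x : ℝ => 1 - Real.cos x) ^ (2*i) : ℝ → ℝ) ∈ Vspan := pow_mem_V hsub (2*i)
    exact mul_mem_V h1 h2
  obtain ⟨-, a, b, c, hint⟩ := V_le_W hg
  refine ⟨b, c, a, ?_⟩
  have heq : (∫ x in (0:ℝ)..(π/2), x * cos x ^ 2 * (1 - cos x) ^ (2*i)) =
      ∫ x in (0:ℝ)..(π/2), x * (Real.cos x ^ 2 * (1 - Real.cos x) ^ (2*i)) := by
    congr 1; funext x; ring
  rw [heq, hint]
  have hπ : (π:ℝ) ≠ 0 := Real.pi_ne_zero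
  field_simp
  ring
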